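/- Define Φ₁ : ℂ → ℂ⁴ by Φ₁(z) = (−3z̄, 3z², √3(2|z|² − 1), √3·z·(2 − |z|²)). Then for every z ∈ ℂ: (i) |Φ₁(z)|² = 3(1 + |z|²)³; (ii) ⟨∂_z Φ₁(z), I(Φ₁(z))⟩ = −6(1 + |z|²)², where ∂_z Φ₁ = ½(∂ₓΦ₁ − i∂_yΦ₁); and consequently (iii) 4·|⟨∂_z Φ₁(z), I(Φ₁(z))⟩|² / |Φ₁(z)|⁴ = 16 / (1 + |z|²)². (This is the computation in Example 2.11 showing that the induced metric g_Ψ of the quaternionic harmonic map Ψ = Φ₂ : ℂP¹ → ℂP³ built from the Veronese-type curve equals 4 g_{S²}; in particular ∂̄Ψ has no zeroes and the round metric on the sphere is critical for the second Dirac eigenvalue.) -/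

import Mathlib

open Complex

/-- Wirtinger derivative `∂_z F = ½(∂ₓF - i ∂_yF)` of a map `F : ℂ → E`. -/
noncomputable def wirtZ {E : Type*} [NormedAddCommGroup E] [NormedSpace ℂ E]
    (F : ℂ → E) (z : ℂ) : E :=
  (1 / 2 : ℂ) • (fderiv ℝ F z 1 - Complex.I • fderiv ℝ F z Complex.I)

/-- The first Frénet frame element `Φ₁(z) = (-3z̄, 3z², √3(2|z|² - 1), √3 z(2 - |z|²))`
of the horizontal holomorphic curve `Φ([1:z]) = [1 : z³ : -√3 z : √3 z²]`. -/
noncomputable def frenetPhi1 (z : ℂ) : Fin 4 → ℂ :=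
  ![-3 * (starRingEnd ℂ) z, 3 * z ^ 2,
    (Real.sqrt 3 : ℂ) * (2 * (Complex.normSq z : ℂ) - 1),
    (Real.sqrt 3 : ℂ) * z * (2 - (Complex.normSq z : ℂ))]

/-- The quaternionic structure `I(z₁, z₂, z₃, z₄) = (-z̄₂, z̄₁, -z̄₄, z̄₃)` on `ℂ⁴`. -/
def quatI4 (v : Fin 4 → ℂ) : Fin 4 → ℂ :=
  ![-(starRingEnd ℂ) (v 1), (starRingEnd ℂ) (v 0),
    -(starRingEnd ℂ) (v 3), (starRingEnd ℂ) (v 2)]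

/-- The Hermitian inner product `⟨u, v⟩ = Σⱼ uⱼ v̄ⱼ` on `ℂ⁴`. -/
noncomputable def herm4 (u v : Fin 4 → ℂ) : ℂ :=
  ∑ j, u j * (starRingEnd ℂ) (v j)

noncomputable def conjL : ℂ →L[ℝ] ℂ := Complex.conjCLE.toContinuousLinearMap

lemma conjL_apply (w : ℂ) : conjL w = (starRingEnd ℂ) w := rfl

lemma hasFDerivAt_conj (z : ℂ) :
    HasFDerivAt (fun w : ℂ => (starRingEnd ℂ) w) conjL z :=
  conjL.hasFDerivAt

noncomputable def sq3 : ℂ := (Real.sqrt 3 : ℝ)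

lemma phi1_eq : frenetPhi1 = fun z =>
    ![-3 * (starRingEnd ℂ) z, 3 * z ^ 2,
      sq3 * (2 * (z * (starRingEnd ℂ) z) - 1),
      sq3 * (z * (2 - z * (starRingEnd ℂ) z))] := by
  funext z i
  fin_cases i <;>
    simp [frenetPhi1, sq3, Complex.mul_conj] <;> ring

noncomputable def Dphi (z : ℂ) : Fin 4 → (ℂ →L[ℝ] ℂ) :=
  ![(-3 : ℂ) • conjL,
    (6 * z) • ContinuousLinearMap.id ℝ ℂ,
    (2 * sq3 * z) • conjL + (2 * sq3 * (starRingEnd ℂ) z) • ContinuousLinearMap.id ℝ ℂ,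
    (sq3 * (2 - 2 * z * (starRingEnd ℂ) z)) • ContinuousLinearMap.id ℝ ℂ
      + (-(sq3 * z ^ 2)) • conjL]

lemma hasFDerivAt_phi1 (z : ℂ) :
    HasFDerivAt frenetPhi1 (ContinuousLinearMap.pi (Dphi z)) z := by
  have hmul : HasFDerivAt (fun w : ℂ => w * (starRingEnd ℂ) w)
      (z • conjL + ((starRingEnd ℂ) z) • ContinuousLinearMap.id ℝ ℂ) z :=
    (hasFDerivAt_id z).mul (hasFDerivAt_conj z)
  have h0 : HasFDerivAt (fun w : ℂ => -3 * (starRingEnd ℂ) w) (Dphi z 0) z := by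
    have := (hasFDerivAt_conj z).const_mul (-3 : ℂ)
    exact this.congr_fderiv (by ext w; simp [Dphi, conjL_apply])
  have h1 : HasFDerivAt (fun w : ℂ => 3 * w ^ 2) (Dphi z 1) z := by
    have h := (((hasDerivAt_pow 2 z).const_mul (3 : ℂ)).hasFDerivAt).restrictScalars ℝ
    refine h.congr_fderiv ?_
    ext w
    simp [Dphi]
    ring
  have h2 : HasFDerivAt (fun w : ℂ => sq3 * (2 * (w * (starRingEnd ℂ) w) - 1))
      (Dphi z 2) z := by
    have h := ((hmul.const_mul (2 : ℂ)).sub_const 1).const_mul sq3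
    refine h.congr_fderiv ?_
    ext w
    simp [Dphi, conjL_apply, smul_eq_mul]
    ring
  have h3 : HasFDerivAt (fun w : ℂ => sq3 * (w * (2 - w * (starRingEnd ℂ) w)))
      (Dphi z 3) z := by
    have hin : HasFDerivAt (fun w : ℂ => (2 : ℂ) - w * (starRingEnd ℂ) w)
        (-(z • conjL + ((starRingEnd ℂ) z) • ContinuousLinearMap.id ℝ ℂ)) z :=
      hmul.const_sub 2
    have h := ((hasFDerivAt_id z).mul hin).const_mul sq3
    refine h.congr_fderiv ?_
    ext w
    simp [Dphi, conjL_apply, smul_eq_mul]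
    ring
  rw [phi1_eq]
  apply hasFDerivAt_pi''
  intro i
  rw [ContinuousLinearMap.proj_pi]
  fin_cases i
  · exact h0
  · exact h1
  · exact h2
  · exact h3

lemma wirt_eval (z : ℂ) : wirtZ frenetPhi1 z =
    ![0, 6 * z, 2 * sq3 * (starRingEnd ℂ) z,
      sq3 * (2 - 2 * (z * (starRingEnd ℂ) z))] := by
  rw [wirtZ, (hasFDerivAt_phi1 z).fderiv]
  funext i
  fin_cases i <;>
    simp [Dphi, ContinuousLinearMap.pi_apply, conjL_apply, Pi.smul_apply, Pi.sub_apply,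
      smul_eq_mul, Complex.conj_I] <;> ring_nf <;> simp [Complex.I_sq] <;> ring

lemma hs3 : sq3 * sq3 = 3 := by
  rw [sq3, ← Complex.ofReal_mul, Real.mul_self_sqrt (by norm_num)]
  norm_num

lemma part1 (z : ℂ) : herm4 (frenetPhi1 z) (frenetPhi1 z)
    = 3 * (1 + (Complex.normSq z : ℂ)) ^ 3 := by
  rw [phi1_eq, ← Complex.mul_conj]
  simp only [herm4, Fin.sum_univ_four, Matrix.cons_val_zero, Matrix.cons_val_one,
    Matrix.head_cons, Matrix.cons_val_two, Matrix.tail_cons, Matrix.cons_val_three,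
    map_mul, map_sub, map_neg, map_one, map_ofNat, map_pow, Complex.conj_conj,
    Complex.conj_ofReal, sq3]
  have h : ((Real.sqrt 3 : ℝ) : ℂ) * ((Real.sqrt 3 : ℝ) : ℂ) = 3 := hs3
  linear_combination ((2 * (z * (starRingEnd ℂ) z) - 1) ^ 2
    + z * (starRingEnd ℂ) z * (2 - z * (starRingEnd ℂ) z) ^ 2) * h

lemma part2 (z : ℂ) : herm4 (wirtZ frenetPhi1 z) (quatI4 (frenetPhi1 z))
    = -6 * (1 + (Complex.normSq z : ℂ)) ^ 2 := by
  rw [wirt_eval, phi1_eq, ← Complex.mul_conj]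
  simp only [herm4, quatI4, Fin.sum_univ_four, Matrix.cons_val_zero, Matrix.cons_val_one,
    Matrix.head_cons, Matrix.cons_val_two, Matrix.tail_cons, Matrix.cons_val_three,
    map_mul, map_sub, map_neg, map_one, map_ofNat, map_pow, Complex.conj_conj,
    Complex.conj_ofReal, sq3]
  have h : ((Real.sqrt 3 : ℝ) : ℂ) * ((Real.sqrt 3 : ℝ) : ℂ) = 3 := hs3
  linear_combination (-2 * (z * (starRingEnd ℂ) z) * (2 - z * (starRingEnd ℂ) z)
    + (2 - 2 * (z * (starRingEnd ℂ) z)) * (2 * (z * (starRingEnd ℂ) z) - 1)) * h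

/-- Example 2.11, metric computation: for
`Φ₁(z) = (-3z̄, 3z², √3(2|z|² - 1), √3 z(2 - |z|²))` one has `|Φ₁|² = 3(1 + |z|²)³`,
`⟨∂_z Φ₁, I(Φ₁)⟩ = -6(1 + |z|²)²`, and hence
`4|⟨∂_z Φ₁, I(Φ₁)⟩|²/|Φ₁|⁴ = 16/(1 + |z|²)²`, so the induced metric `g_Ψ` of the
quaternionic harmonic map `Ψ = Φ₂` equals `4 g_{S²}`. -/
theorem veronese_induced_metric :
    ∀ z : ℂ,
      herm4 (frenetPhi1 z) (frenetPhi1 z)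
          = 3 * (1 + (Complex.normSq z : ℂ)) ^ 3 ∧
      herm4 (wirtZ frenetPhi1 z) (quatI4 (frenetPhi1 z))
          = -6 * (1 + (Complex.normSq z : ℂ)) ^ 2 ∧
      4 * ‖(herm4 (wirtZ frenetPhi1 z) (quatI4 (frenetPhi1 z)))‖ ^ 2 /
          ‖(herm4 (frenetPhi1 z) (frenetPhi1 z))‖ ^ 2
        = 16 / (1 + Complex.normSq z) ^ 2 := by
  intro z
  refine ⟨part1 z, part2 z, ?_⟩
  rw [part1, part2]
  set n : ℝ := Complex.normSq z with hn
  have hn0 : 0 ≤ n := Complex.normSq_nonneg z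
  have hp : (0:ℝ) < 1 + n := by linarith
  have e1 : (-6 * (1 + (n:ℂ)) ^ 2) = ((-6 * (1 + n) ^ 2 : ℝ) : ℂ) := by push_cast; ring
  have e2 : (3 * (1 + (n:ℂ)) ^ 3) = ((3 * (1 + n) ^ 3 : ℝ) : ℂ) := by push_cast; ring
  have a1 : |(-6 * (1 + n) ^ 2 : ℝ)| = 6 * (1 + n) ^ 2 := by
    rw [abs_of_nonpos (by nlinarith)]; ring
  have a2 : |(3 * (1 + n) ^ 3 : ℝ)| = 3 * (1 + n) ^ 3 :=
    abs_of_nonneg (by positivity)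
  rw [e1, e2, Complex.norm_real, Complex.norm_real, Real.norm_eq_abs, Real.norm_eq_abs, a1, a2]
  field_simp
  ring
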